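/- Let N ≥ 3 be odd, 0 ≤ γ < 1, and j ∈ {0,1,…,N−1}. Then Σ_{m=0}^{N−1} γ^{min(m, N−m)} e^{2π i j m/N} = (1−γ)·(1 + γ − 2γ^{(N+1)/2}(−1)^j cos(jπ/N)) / (1 + γ² − 2γ cos(2jπ/N)). In particular, these are the N eigenvalues of the circulant matrix with first column (γ^{min(m,N−m)})_{m=0}^{N−1}. -/

import Mathlib

open Finset Complex

lemma alg_aux (γ g u c : ℂ) (hu : u ≠ 0) (hA : γ*u^2 - 1 ≠ 0) (hB : γ*(u^2)⁻¹ - 1 ≠ 0)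
    (hc : c = 1 ∨ c = -1) :
    (g*(c*u) - 1)/(γ*u^2 - 1) + ((g*(c*u⁻¹) - 1)/(γ*(u^2)⁻¹ - 1) - 1)
      = (1-γ)*(1+γ-2*g*c*((u+u⁻¹)/2)) / ((γ*u^2-1)*(γ*(u^2)⁻¹-1)) := by
  have hu2 : u^2 ≠ 0 := pow_ne_zero _ hu
  have hB' : γ - u^2 ≠ 0 := by
    intro h
    apply hB
    field_simp
    linear_combination h
  have hrw : γ*(u^2)⁻¹ - 1 = (γ - u^2)/u^2 := by field_simp
  rw [hrw]
  rcases hc with h|h <;> subst h <;>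
  · rw [div_div_eq_mul_div, div_sub_one hB', div_add_div _ _ hA hB', div_eq_div_iff (mul_ne_zero hA hB') (mul_ne_zero hA (div_ne_zero hB' hu2))]
    field_simp
    ring

lemma key_sum (γ : ℝ) (h0 : 0 ≤ γ) (h1 : γ < 1) (u c : ℂ)
    (hu0 : u ≠ 0) (hu1 : ‖u‖ = 1) (hc : c = 1 ∨ c = -1)
    (t : ℕ) (huN : u ^ (2*t+1) = c) :
    ∑ m ∈ Finset.range (2*t+1), (γ:ℂ) ^ (min m (2*t+1 - m)) * (u^2) ^ m
      = (1-γ) * (1+γ-2*γ^(t+1)*c*((u+u⁻¹)/2)) / (1+γ^2-2*γ*((u^2+(u^2)⁻¹)/2)) := by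
  set a : ℂ := γ * u^2 with ha
  set b : ℂ := γ * (u^2)⁻¹ with hb
  have hc2 : c^2 = 1 := by rcases hc with h|h <;> simp [h]
  have hu2N : (u^2)^(2*t+1) = 1 := by
    rw [← pow_mul, mul_comm 2 (2*t+1), pow_mul, huN, hc2]
  have hau : ‖a‖ < 1 := by
    rw [ha, norm_mul, norm_pow, hu1]
    simpa [abs_of_nonneg h0] using h1
  have hbu : ‖b‖ < 1 := by
    rw [hb, norm_mul, norm_inv, norm_pow, hu1]
    simpa [abs_of_nonneg h0] using h1
  have haa : a ≠ 1 := by intro h; rw [h] at hau; simp at hau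
  have hbb : b ≠ 1 := by intro h; rw [h] at hbu; simp at hbu
  have ha1 : a - 1 ≠ 0 := sub_ne_zero.mpr haa
  have hb1 : b - 1 ≠ 0 := sub_ne_zero.mpr hbb
  have hD : 1+(γ:ℂ)^2-2*γ*((u^2+(u^2)⁻¹)/2) = (a-1)*(b-1) := by
    rw [ha, hb]
    field_simp
    ring
  have hsplit : ∑ m ∈ Finset.range (2*t+1), (γ:ℂ) ^ (min m (2*t+1 - m)) * (u^2) ^ m
      = (∑ m ∈ Finset.range (t+1), a ^ m) + (∑ k ∈ Finset.Ico 1 (t+1), b ^ k) := by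
    rw [Finset.range_eq_Ico,
      ← Finset.sum_Ico_consecutive _ (by omega : 0 ≤ t+1) (by omega : t+1 ≤ 2*t+1)]
    congr 1
    · rw [← Finset.range_eq_Ico]
      refine Finset.sum_congr rfl fun m hm => ?_
      rw [Finset.mem_range] at hm
      have hmin : min m (2*t+1-m) = m := by omega
      rw [hmin, ha, mul_pow]
    · refine Finset.sum_nbij' (fun m => 2*t+1-m) (fun k => 2*t+1-k) ?_ ?_ ?_ ?_ ?_
      · intro m hm; simp only [Finset.mem_Ico] at *; omega
      · intro m hm; simp only [Finset.mem_Ico] at *; omega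
      · intro m hm; simp only [Finset.mem_Ico] at hm; omega
      · intro m hm; simp only [Finset.mem_Ico] at hm; omega
      · intro m hm
        simp only [Finset.mem_Ico] at hm
        have hmin : min m (2*t+1-m) = 2*t+1-m := by omega
        rw [hmin, hb, mul_pow, inv_pow]
        congr 1
        refine eq_inv_of_mul_eq_one_left ?_
        rw [← pow_add, (by omega : m + (2*t+1-m) = 2*t+1), hu2N]
  rw [hsplit]
  have hgeo1 : ∑ m ∈ Finset.range (t+1), a ^ m = (a^(t+1) - 1)/(a-1) := geom_sum_eq haa _
  have hgeo2 : ∑ k ∈ Finset.Ico 1 (t+1), b ^ k = (b^(t+1) - 1)/(b-1) - 1 := by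
    have hg := geom_sum_eq hbb (t+1)
    rw [Finset.range_eq_Ico,
      ← Finset.sum_Ico_consecutive _ (Nat.zero_le 1) (by omega : 1 ≤ t+1)] at hg
    have h01 : ∑ k ∈ Finset.Ico 0 1, b ^ k = 1 := by simp
    rw [h01] at hg
    linear_combination hg
  rw [hgeo1, hgeo2, hD]
  have hat : a^(t+1) = γ^(t+1) * (c * u) := by
    rw [ha, mul_pow, ← pow_mul]
    congr 1
    rw [(by omega : 2*(t+1) = (2*t+1) + 1), pow_succ, huN, mul_comm]
  have hbt : b^(t+1) = γ^(t+1) * (c * u⁻¹) := by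
    rw [hb, mul_pow, inv_pow, ← pow_mul]
    congr 1
    rw [(by omega : 2*(t+1) = (2*t+1) + 1), pow_succ, huN]
    rcases hc with h|h <;> rw [h] <;> simp [mul_inv, inv_neg]
  rw [hat, hbt]
  exact alg_aux _ _ _ _ hu0 ha1 hb1 hc

lemma cosC (x : ℝ) : ((Real.cos x : ℝ) : ℂ)
    = (Complex.exp (x * Complex.I) + Complex.exp (-(x * Complex.I))) / 2 := by
  rw [Complex.ofReal_cos]
  simp [Complex.cos, neg_mul]

/-- For odd `N ≥ 3`, `0 ≤ γ < 1` and `j ∈ {0,…,N−1}`, the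
discrete Fourier transform of `(γ^{min(m,N−m)})_m` equals
`(1−γ)(1 + γ − 2γ^{(N+1)/2}(−1)^j cos(jπ/N)) / (1 + γ² − 2γ cos(2jπ/N))`;
in particular these are the `N` eigenvalues of the circulant matrix with
entries `γ^{min(|i−k|, N−|i−k|)}`. -/
theorem eigenvalues_ring_exponential (N : ℕ) (hN : 3 ≤ N) (hodd : Odd N)
    (γ : ℝ) (h0 : 0 ≤ γ) (h1 : γ < 1) (j : ℕ) (hj : j < N)
    (lam : ℝ)
    (hlam : lam = (1 - γ) *
        (1 + γ - 2 * γ ^ ((N + 1) / 2) * (-1 : ℝ) ^ j * Real.cos (j * Real.pi / N)) /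
        (1 + γ ^ 2 - 2 * γ * Real.cos (2 * j * Real.pi / N)))
    (Γ : Matrix (Fin N) (Fin N) ℂ)
    (hΓ : Γ = Matrix.of fun i k : Fin N =>
      ((γ : ℂ) ^ (min (((i.val : ℤ) - (k.val : ℤ)).natAbs)
        (N - (((i.val : ℤ) - (k.val : ℤ)).natAbs))))) :
    (∑ m ∈ Finset.range N, (γ : ℂ) ^ (min m (N - m)) *
        Complex.exp (2 * Real.pi * Complex.I * j * m / N)) = (lam : ℂ) ∧
    Γ.mulVec (fun m : Fin N => Complex.exp (2 * Real.pi * Complex.I * j * m.val / N))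
      = (lam : ℂ) •
        (fun m : Fin N => Complex.exp (2 * Real.pi * Complex.I * j * m.val / N)) := by
  obtain ⟨t, ht⟩ := hodd
  have hNC : (N:ℂ) ≠ 0 := Nat.cast_ne_zero.mpr (by omega)
  set u : ℂ := Complex.exp (Real.pi * Complex.I * j / N) with hu
  set c : ℂ := (-1:ℂ)^j with hcdef
  have hc : c = 1 ∨ c = -1 := by
    rcases Nat.even_or_odd j with h|h
    · left; rw [hcdef, h.neg_one_pow]
    · right; rw [hcdef, h.neg_one_pow]
  have hu0 : u ≠ 0 := Complex.exp_ne_zero _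
  have hz : (Real.pi : ℂ) * Complex.I * j / N = ((Real.pi * j / N : ℝ) : ℂ) * Complex.I := by
    push_cast; ring
  have hu1 : ‖u‖ = 1 := by
    rw [hu, hz]; exact Complex.norm_exp_ofReal_mul_I _
  have huN : u ^ N = c := by
    rw [hu, ← Complex.exp_nat_mul]
    have : (N:ℂ) * ((Real.pi:ℂ) * Complex.I * j / N) = (j:ℂ) * ((Real.pi:ℂ) * Complex.I) := by
      field_simp
    rw [this, Complex.exp_nat_mul, Complex.exp_pi_mul_I, hcdef]
  have hexp : ∀ m : ℕ, Complex.exp (2 * (Real.pi:ℂ) * Complex.I * j * m / N) = (u^2)^m := by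
    intro m
    rw [← pow_mul, hu, ← Complex.exp_nat_mul]
    congr 1
    push_cast
    field_simp
  -- cosine identities
  have hcos1 : ((Real.cos (j * Real.pi / N) : ℝ) : ℂ) = (u + u⁻¹)/2 := by
    rw [cosC]
    congr 2
    · rw [hu]; congr 1; push_cast; ring
    · rw [hu, ← Complex.exp_neg]; congr 1; push_cast; ring
  have hcos2 : ((Real.cos (2 * j * Real.pi / N) : ℝ) : ℂ) = (u^2 + (u^2)⁻¹)/2 := by
    rw [cosC]
    congr 2
    · rw [hu, ← Complex.exp_nat_mul]; congr 1; push_cast; ring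
    · rw [hu, ← Complex.exp_nat_mul, ← Complex.exp_neg]; congr 1; push_cast; ring
  have hhalf : (N + 1) / 2 = t + 1 := by omega
  -- Part 1
  have hS : (∑ m ∈ Finset.range N, (γ : ℂ) ^ (min m (N - m)) *
      Complex.exp (2 * Real.pi * Complex.I * j * m / N)) = (lam : ℂ) := by
    have h2 : (∑ m ∈ Finset.range N, (γ : ℂ) ^ (min m (N - m)) *
        Complex.exp (2 * Real.pi * Complex.I * j * m / N))
        = ∑ m ∈ Finset.range N, (γ:ℂ) ^ (min m (N - m)) * (u^2) ^ m := by
      refine Finset.sum_congr rfl fun m _ => ?_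
      rw [hexp m]
    rw [h2, ht]
    rw [key_sum γ h0 h1 u c hu0 hu1 hc t (by rw [← ht]; exact huN)]
    have hcos1' : Complex.cos ((j:ℂ) * (Real.pi:ℂ) / N) = (u + u⁻¹)/2 := by
      have harg : ((j:ℂ) * (Real.pi:ℂ) / N) = ((j * Real.pi / N : ℝ) : ℂ) := by push_cast; ring
      rw [harg, ← Complex.ofReal_cos, hcos1]
    have hcos2' : Complex.cos (2 * (j:ℂ) * (Real.pi:ℂ) / N) = (u^2 + (u^2)⁻¹)/2 := by
      have harg : (2 * (j:ℂ) * (Real.pi:ℂ) / N) = ((2 * j * Real.pi / N : ℝ) : ℂ) := by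
        push_cast; ring
      rw [harg, ← Complex.ofReal_cos, hcos2]
    rw [hlam]
    push_cast
    rw [hcos1', hcos2', hhalf, ← hcdef]
  refine ⟨hS, ?_⟩
  -- Part 2
  haveI : NeZero N := ⟨by omega⟩
  have hu2N : (u^2)^N = 1 := by
    rw [← pow_mul, mul_comm 2 N, pow_mul, huN]
    rcases hc with h|h <;> simp [h]
  funext m
  have hvm : ∀ k : Fin N, Complex.exp (2 * Real.pi * Complex.I * j * k.val / N)
      = (u^2)^k.val := fun k => hexp k.val
  rw [hΓ]
  show (∑ k : Fin N, (γ : ℂ) ^ (min (((m.val : ℤ) - (k.val : ℤ)).natAbs)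
        (N - (((m.val : ℤ) - (k.val : ℤ)).natAbs)))
      * Complex.exp (2 * Real.pi * Complex.I * j * k.val / N))
    = (lam : ℂ) * Complex.exp (2 * Real.pi * Complex.I * j * m.val / N)
  simp only [hvm]
  set F : Fin N → ℂ := fun k => (γ : ℂ) ^ (min (((m.val : ℤ) - (k.val : ℤ)).natAbs)
        (N - (((m.val : ℤ) - (k.val : ℤ)).natAbs))) * (u^2)^k.val with hF
  have hcomp : ∑ k : Fin N, F k = ∑ k : Fin N, F (m + k) :=
    (Equiv.sum_comp (Equiv.addLeft m) F).symm
  have hterm : ∀ k : Fin N, F (m + k)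
      = ((γ:ℂ) ^ (min k.val (N - k.val)) * (u^2)^k.val) * (u^2)^m.val := by
    intro k
    have hK : k.val < N := k.isLt
    have hM : m.val < N := m.isLt
    have hval : (m + k).val = (m.val + k.val) % N := Fin.val_add m k
    by_cases hlt : m.val + k.val < N
    · have hv : (m + k).val = m.val + k.val := by rw [hval, Nat.mod_eq_of_lt hlt]
      have hna : (((m.val : ℤ)) - (((m + k).val : ℕ) : ℤ)).natAbs = k.val := by
        rw [hv]; push_cast; omega
      rw [hF]
      simp only
      rw [hna, hv, pow_add]
      ring
    · have hv : (m + k).val = m.val + k.val - N := by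
        rw [hval, Nat.mod_eq_sub_mod (by omega), Nat.mod_eq_of_lt (by omega)]
      have hna : (((m.val : ℤ)) - (((m + k).val : ℕ) : ℤ)).natAbs = N - k.val := by
        rw [hv]; push_cast [Nat.cast_sub (by omega : N ≤ m.val + k.val)]; omega
      have hmin : min (N - k.val) (N - (N - k.val)) = min k.val (N - k.val) := by omega
      have hpow : (u^2)^((m + k).val) = (u^2)^k.val * (u^2)^m.val := by
        rw [hv]
        have : (u^2)^(m.val + k.val - N) * (u^2)^N = (u^2)^k.val * (u^2)^m.val := by
          rw [← pow_add, (by omega : m.val + k.val - N + N = m.val + k.val), pow_add]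
          ring
        rw [← this, hu2N, mul_one]
      rw [hF]
      simp only
      rw [hna, hmin, hpow]
      ring
  rw [hcomp]
  calc ∑ k : Fin N, F (m + k)
      = ∑ k : Fin N, ((γ:ℂ) ^ (min k.val (N - k.val)) * (u^2)^k.val) * (u^2)^m.val :=
        Finset.sum_congr rfl fun k _ => hterm k
    _ = (∑ k : Fin N, (γ:ℂ) ^ (min k.val (N - k.val)) * (u^2)^k.val) * (u^2)^m.val := by
        rw [Finset.sum_mul]
    _ = (lam : ℂ) * (u^2)^m.val := by
        rw [Fin.sum_univ_eq_sum_range (fun r => (γ:ℂ) ^ (min r (N - r)) * (u^2)^r)]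
        congr 1
        rw [← hS]
        exact Finset.sum_congr rfl fun r hr => by rw [hexp r]
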